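/- If the forbidden moves T4, F1 and F3 are allowed, then the move Fv holds: any two Gauss diagrams related by the local move O(j,t) b U(i,s) ↦ U(i,s) b O(j,t) (an arrowtail moved past a bar and then an adjacent arrowhead) are related by a finite sequence of moves R1, T2, T3, T4, F1, F3, F4, Fs and Fo. -/
import Mathlib


/-- Symbols of a Gauss word: over/under passages of a crossing with a sign,
and a bar. -/
inductive GSym : Type
  | O : ℕ → Bool → GSym
  | U : ℕ → Bool → GSym
  | bar : GSym
  deriving DecidableEq

open GSym

/-- Rotation of a cyclic word. -/
def Rot (w w' : List GSym) : Prop := ∃ a t, w = a :: t ∧ w' = t ++ [a]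

/-- Equivalence generated by a set of local moves together with rotation
(words are cyclic). -/
def MovesEquiv (S : List GSym → List GSym → Prop) : List GSym → List GSym → Prop :=
  Relation.EqvGen (fun w w' => S w w' ∨ Rot w w')

/-- A Gauss word of a twisted knot: each chord label occurs exactly once as `O`
and once as `U`, with a common sign. -/
def IsGaussWord (w : List GSym) : Prop :=
  ∀ i s, (O i s ∈ w ∨ U i s ∈ w) →
    w.count (O i s) = 1 ∧ w.count (U i s) = 1 ∧ ∀ t, t ≠ s → O i t ∉ w ∧ U i t ∉ w

/-- R1: delete an adjacent pair of endpoints of one chord. -/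
def StepR1 (w w' : List GSym) : Prop :=
  ∃ l r i s, (w = l ++ O i s :: U i s :: r ∨ w = l ++ U i s :: O i s :: r) ∧ w' = l ++ r

/-- R2: delete two parallel adjacent chords of opposite signs. -/
def StepR2 (w w' : List GSym) : Prop :=
  ∃ l m r i j s, i ≠ j ∧
    w = l ++ O i s :: O j (!s) :: m ++ U j (!s) :: U i s :: r ∧ w' = l ++ m ++ r

/-- R3: the triangle move on three mutually adjacent chord endpoints (one variant). -/
def StepR3 (w w' : List GSym) : Prop :=
  ∃ l m n r i j k s t u, i ≠ j ∧ j ≠ k ∧ i ≠ k ∧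
    w = l ++ U i s :: U j t :: m ++ O i s :: U k u :: n ++ O j t :: O k u :: r ∧
    w' = l ++ U j t :: U i s :: m ++ U k u :: O i s :: n ++ O k u :: O j t :: r

/-- T2: delete an adjacent pair of bars. -/
def StepT2 (w w' : List GSym) : Prop :=
  ∃ l r, w = l ++ bar :: bar :: r ∧ w' = l ++ r

/-- T3: push a chord across two bars, reversing its sign. -/
def StepT3 (w w' : List GSym) : Prop :=
  ∃ l m r i s,
    w = l ++ O i s :: bar :: m ++ U i s :: bar :: r ∧
    w' = l ++ bar :: O i (!s) :: m ++ bar :: U i (!s) :: r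

/-- T4: delete the two endpoints of a chord separated by a single bar
(the bar remains). -/
def StepT4 (w w' : List GSym) : Prop :=
  ∃ l r i s, (w = l ++ O i s :: bar :: U i s :: r ∨ w = l ++ U i s :: bar :: O i s :: r) ∧
    w' = l ++ bar :: r

/-- F1: swap two adjacent arrowheads. -/
def StepF1 (w w' : List GSym) : Prop :=
  ∃ l r i j s t, i ≠ j ∧ w = l ++ U i s :: U j t :: r ∧ w' = l ++ U j t :: U i s :: r

/-- F2: swap two adjacent arrowtails. -/
def StepF2 (w w' : List GSym) : Prop :=
  ∃ l r i j s t, i ≠ j ∧ w = l ++ O i s :: O j t :: r ∧ w' = l ++ O j t :: O i s :: r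

/-- F3: swap two arrowheads separated by a bar. -/
def StepF3 (w w' : List GSym) : Prop :=
  ∃ l r i j s t, i ≠ j ∧ w = l ++ U i s :: bar :: U j t :: r ∧
    w' = l ++ U j t :: bar :: U i s :: r

/-- F4: swap two arrowtails separated by a bar. -/
def StepF4 (w w' : List GSym) : Prop :=
  ∃ l r i j s t, i ≠ j ∧ w = l ++ O i s :: bar :: O j t :: r ∧
    w' = l ++ O j t :: bar :: O i s :: r

/-- Fs: swap an adjacent arrowhead and arrowtail of the same sign. -/
def StepFs (w w' : List GSym) : Prop :=
  ∃ l r i j s, i ≠ j ∧ w = l ++ U i s :: O j s :: r ∧ w' = l ++ O j s :: U i s :: r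

/-- Fo: swap an adjacent arrowhead and arrowtail of opposite signs. -/
def StepFo (w w' : List GSym) : Prop :=
  ∃ l r i j s, i ≠ j ∧ w = l ++ U i s :: O j (!s) :: r ∧ w' = l ++ O j (!s) :: U i s :: r

/-- Fu: move an arrowhead past a bar and an adjacent arrowtail. -/
def StepFu (w w' : List GSym) : Prop :=
  ∃ l r i j s t, i ≠ j ∧ w = l ++ U i s :: bar :: O j t :: r ∧
    w' = l ++ O j t :: bar :: U i s :: r

/-- Fv: move an arrowtail past a bar and an adjacent arrowhead. -/
def StepFv (w w' : List GSym) : Prop :=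
  ∃ l r i j s t, i ≠ j ∧ w = l ++ O j t :: bar :: U i s :: r ∧
    w' = l ++ U i s :: bar :: O j t :: r


section FvAux

open GSym

private abbrev SAll : List GSym → List GSym → Prop := fun x y =>
  StepR1 x y ∨ StepT2 x y ∨ StepT3 x y ∨ StepT4 x y ∨
    StepF1 x y ∨ StepF3 x y ∨ StepF4 x y ∨ StepFs x y ∨ StepFo x y

private lemma me_of_step {x y : List GSym} (h : SAll x y) : MovesEquiv SAll x y :=
  Relation.EqvGen.rel _ _ (Or.inl h)

private lemma me_symm {x y : List GSym} (h : MovesEquiv SAll x y) : MovesEquiv SAll y x :=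
  Relation.EqvGen.symm _ _ h

private lemma me_trans {x y z : List GSym} (h : MovesEquiv SAll x y)
    (h' : MovesEquiv SAll y z) : MovesEquiv SAll x z :=
  Relation.EqvGen.trans _ _ _ h h'

/-- A tail crosses a bar (leftwards). -/
private lemma tailCross (l r : List GSym) (j : ℕ) (t : Bool) :
    MovesEquiv SAll (l ++ O j t :: bar :: r) (l ++ bar :: O j t :: r) := by
  set k := j + 1 with hk
  have hkj : j ≠ k := by omega
  -- x0 = l ++ O j t :: bar :: r
  -- x1 = l ++ O j t :: U k t :: bar :: O k t :: r
  have h1 : MovesEquiv SAll (l ++ O j t :: bar :: r)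
      (l ++ O j t :: U k t :: bar :: O k t :: r) := by
    apply me_symm; apply me_of_step
    refine Or.inr (Or.inr (Or.inr (Or.inl ⟨l ++ [O j t], r, k, t, Or.inr ?_, ?_⟩))) <;> simp
  -- x2 = l ++ U k t :: O j t :: bar :: O k t :: r
  have h2 : MovesEquiv SAll (l ++ O j t :: U k t :: bar :: O k t :: r)
      (l ++ U k t :: O j t :: bar :: O k t :: r) := by
    apply me_symm; apply me_of_step
    exact Or.inr (Or.inr (Or.inr (Or.inr (Or.inr (Or.inr (Or.inr (Or.inl
      ⟨l, bar :: O k t :: r, k, j, t, hkj.symm, rfl, rfl⟩)))))))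
  -- x3 = l ++ U k t :: O k t :: bar :: O j t :: r
  have h3 : MovesEquiv SAll (l ++ U k t :: O j t :: bar :: O k t :: r)
      (l ++ U k t :: O k t :: bar :: O j t :: r) := by
    apply me_of_step
    refine Or.inr (Or.inr (Or.inr (Or.inr (Or.inr (Or.inr (Or.inl
      ⟨l ++ [U k t], r, j, k, t, t, hkj, ?_, ?_⟩)))))) <;> simp
  -- x4 = l ++ bar :: O j t :: r
  have h4 : MovesEquiv SAll (l ++ U k t :: O k t :: bar :: O j t :: r)
      (l ++ bar :: O j t :: r) := by
    apply me_of_step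
    exact Or.inl ⟨l, bar :: O j t :: r, k, t, Or.inr rfl, rfl⟩
  exact me_trans h1 (me_trans h2 (me_trans h3 h4))

/-- A head crosses a bar (leftwards). -/
private lemma headCross (l r : List GSym) (i : ℕ) (s : Bool) :
    MovesEquiv SAll (l ++ U i s :: bar :: r) (l ++ bar :: U i s :: r) := by
  set k := i + 1 with hk
  have hki : i ≠ k := by omega
  have h1 : MovesEquiv SAll (l ++ U i s :: bar :: r)
      (l ++ U i s :: O k s :: bar :: U k s :: r) := by
    apply me_symm; apply me_of_step
    refine Or.inr (Or.inr (Or.inr (Or.inl ⟨l ++ [U i s], r, k, s, Or.inl ?_, ?_⟩))) <;> simp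
  have h2 : MovesEquiv SAll (l ++ U i s :: O k s :: bar :: U k s :: r)
      (l ++ O k s :: U i s :: bar :: U k s :: r) := by
    apply me_of_step
    exact Or.inr (Or.inr (Or.inr (Or.inr (Or.inr (Or.inr (Or.inr (Or.inl
      ⟨l, bar :: U k s :: r, i, k, s, hki, rfl, rfl⟩)))))))
  have h3 : MovesEquiv SAll (l ++ O k s :: U i s :: bar :: U k s :: r)
      (l ++ O k s :: U k s :: bar :: U i s :: r) := by
    apply me_of_step
    refine Or.inr (Or.inr (Or.inr (Or.inr (Or.inr (Or.inl
      ⟨l ++ [O k s], r, i, k, s, s, hki, ?_, ?_⟩))))) <;> simp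
  have h4 : MovesEquiv SAll (l ++ O k s :: U k s :: bar :: U i s :: r)
      (l ++ bar :: U i s :: r) := by
    apply me_of_step
    exact Or.inl ⟨l, bar :: U i s :: r, k, s, Or.inl rfl, rfl⟩
  exact me_trans h1 (me_trans h2 (me_trans h3 h4))

/-- Adjacent tail-head swap (Fs or Fo depending on signs). -/
private lemma swapOU (l r : List GSym) (i j : ℕ) (s t : Bool) (hij : i ≠ j) :
    MovesEquiv SAll (l ++ O j t :: U i s :: r) (l ++ U i s :: O j t :: r) := by
  apply me_symm; apply me_of_step
  by_cases hts : t = s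
  · subst hts
    exact Or.inr (Or.inr (Or.inr (Or.inr (Or.inr (Or.inr (Or.inr (Or.inl
      ⟨l, r, i, j, t, hij, rfl, rfl⟩)))))))
  · have : t = !s := by cases s <;> cases t <;> simp_all
    subst this
    exact Or.inr (Or.inr (Or.inr (Or.inr (Or.inr (Or.inr (Or.inr (Or.inr
      ⟨l, r, i, j, s, hij, rfl, rfl⟩)))))))

end FvAux

open GSym in
/-- Move Fv is derivable from R1, T2, T3, T4, F1, F3, F4, Fs and Fo. -/
theorem Fv_derivable (w w' : List GSym) (h : StepFv w w') :
    MovesEquiv (fun x y => StepR1 x y ∨ StepT2 x y ∨ StepT3 x y ∨ StepT4 x y ∨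
      StepF1 x y ∨ StepF3 x y ∨ StepF4 x y ∨ StepFs x y ∨ StepFo x y) w w' := by
  obtain ⟨l, r, i, j, s, t, hij, hw, hw'⟩ := h
  subst hw; subst hw'
  have h1 := tailCross l (U i s :: r) j t
  have h2 := swapOU (l ++ [bar]) r i j s t hij
  have h3 := me_symm (headCross l (O j t :: r) i s)
  have e2 : MovesEquiv SAll (l ++ bar :: O j t :: U i s :: r)
      (l ++ bar :: U i s :: O j t :: r) := by simpa using h2
  exact me_trans h1 (me_trans e2 h3)
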